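/- Under the stated assumptions, 0 < k − l·c < p(m) for every m ∈ ℤ; in particular (k − l·c)/p(m) < 1 for all m ∈ ℤ. -/
import Mathlib


/-- `pSeq a b k l p` says that `p : ℤ → ℤ` is the (unique) sequence with `p 0 = l`,
`p 1 = k`, and `p (m+2) = b * p (m+1) - p m` for even `m`,
`p (m+2) = a * p (m+1) - p m` for odd `m`. -/
def pSeq (a b k l : ℤ) (p : ℤ → ℤ) : Prop :=
  p 0 = l ∧ p 1 = k ∧
    ∀ m : ℤ, p (m + 2) = (if Even m then b else a) * p (m + 1) - p m

theorem k_sub_lc_pos_lt_p (a b k l : ℤ) (ha : 2 ≤ a) (hb : 2 ≤ b) (hab : 4 < a * b)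
    (hl : 1 < l) (hlk : l < k) (hka : k < (a - 1) * l) (hcop : IsCoprime k l)
    (c : ℤ) (hc1 : 1 ≤ c) (hck : c ≤ k - 1)
    (hcl : (c : ℚ) / k < 1 / l) (hcr : (1 : ℚ) / l < (c + 1) / k)
    (p : ℤ → ℤ) (hp : pSeq a b k l p) :
    ∀ m : ℤ, 0 < k - l * c ∧ k - l * c < p m ∧ ((k : ℚ) - l * c) / (p m) < 1 := by
  obtain ⟨hp0, hp1, hrec⟩ := hp
  have hl0 : (0:ℤ) < l := by linarith
  have hk0 : (0:ℤ) < k := by linarith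
  have hlQ : (0:ℚ) < (l:ℚ) := by exact_mod_cast hl0
  have hkQ : (0:ℚ) < (k:ℚ) := by exact_mod_cast hk0
  rw [div_lt_div_iff₀ hkQ hlQ] at hcl
  rw [div_lt_div_iff₀ hlQ hkQ] at hcr
  have hclk : c * l < k := by exact_mod_cast (by linarith : ((c:ℚ)) * l < k)
  have hkcl : k < (c + 1) * l := by exact_mod_cast (by linarith : ((k:ℚ)) < (c+1) * l)
  have hfwd : ∀ n : ℕ, l ≤ p n ∧ p n ≤ p (n + 1) := by
    intro n
    induction n with
    | zero =>
      refine ⟨?_, ?_⟩ <;> norm_num [hp0, hp1] <;> linarith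
    | succ n ih =>
      obtain ⟨h1, h2⟩ := ih
      have h3 : l ≤ p (n + 1) := le_trans h1 h2
      have hr := hrec n
      have hcoef : 2 ≤ (if Even (n:ℤ) then b else a) := by split <;> assumption
      have hmul : 2 * p ((n:ℤ) + 1) ≤ (if Even (n:ℤ) then b else a) * p ((n:ℤ) + 1) :=
        mul_le_mul_of_nonneg_right hcoef (by linarith)
      constructor
      · push_cast; exact h3
      · push_cast
        have : p ((n:ℤ) + 2) = (if Even (n:ℤ) then b else a) * p ((n:ℤ)+1) - p n := hr
        have : (1:ℤ) * p ((n:ℤ)+1+1) = (if Even (n:ℤ) then b else a) * p ((n:ℤ)+1) - p n := by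
          rw [one_mul]; rw [show (n:ℤ)+1+1 = (n:ℤ)+2 by ring]; exact hr
        linarith
  have hbwd : ∀ n : ℕ, l ≤ p (-(n:ℤ)) ∧ p (-(n:ℤ)) ≤ p (-(n:ℤ) - 1) := by
    intro n
    induction n with
    | zero =>
      have hr := hrec (-1)
      have hodd : ¬ Even (-1 : ℤ) := by decide
      rw [if_neg hodd] at hr
      norm_num at hr
      -- hr : p 1 = a * p 0 - p (-1)
      rw [hp0, hp1] at hr
      constructor
      · simp [hp0]
      · simp only [Nat.cast_zero, neg_zero, zero_sub, hp0]
        nlinarith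
    | succ n ih =>
      obtain ⟨h1, h2⟩ := ih
      have h3 : l ≤ p (-(n:ℤ) - 1) := le_trans h1 h2
      have hr := hrec (-(n:ℤ) - 2)
      have hcoef : 2 ≤ (if Even (-(n:ℤ) - 2) then b else a) := by split <;> assumption
      have hmul : 2 * p (-(n:ℤ) - 1) ≤ (if Even (-(n:ℤ) - 2) then b else a) * p (-(n:ℤ) - 1) :=
        mul_le_mul_of_nonneg_right hcoef (by linarith)
      rw [show -(n:ℤ) - 2 + 2 = -(n:ℤ) by ring, show -(n:ℤ) - 2 + 1 = -(n:ℤ) - 1 by ring] at hr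
      constructor
      · convert h3 using 2; push_cast; ring
      · have goal2 : p (-(n:ℤ) - 1) ≤ p (-(n:ℤ) - 2) := by linarith
        convert goal2 using 2 <;> push_cast <;> ring
  have hlp : ∀ m : ℤ, l ≤ p m := by
    intro m
    rcases m.eq_nat_or_neg with ⟨n, rfl | rfl⟩
    · exact (hfwd n).1
    · exact (hbwd n).1
  intro m
  have hpm : l ≤ p m := hlp m
  have hpm0 : 0 < p m := lt_of_lt_of_le hl0 hpm
  have hg1 : 0 < k - l * c := by nlinarith
  have hg2 : k - l * c < p m := by nlinarith
  refine ⟨hg1, hg2, ?_⟩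
  rw [div_lt_one (by exact_mod_cast hpm0)]
  exact_mod_cast (by push_cast; exact_mod_cast hg2 : ((k:ℚ) - l * c) < (p m : ℚ))
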